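/- For i = 1, 2, let Q_i be an n×n orthogonal projection, let G_i be a Hermitian positive semidefinite n×n matrix with G_i·Q_i = Q_i·G_i = G_i and such that Q_i·v = v together with G_i·v = 0 imply v = 0, and set H_i := I − Q_i + G_i. Then each H_i is positive definite; moreover, if S_i are positive definite Hermitian matrices with S_i² = H_i (so S_i = H_i^{1/2}) and C₁ = C₂, where C_i := S_i⁻¹·Q_i, then Q₁ = Q₂, G₁ = G₂ and H₁ = H₂. (Proposition 8.1: a Gel'fand–Levitan normalization matrix C̃_{N+1} = H̃_{N+1}^{−1/2}·Q̃_{N+1} uniquely determines the matrices Q̃_{N+1}, G̃_{N+1} and H̃_{N+1}, and in this construction H̃_{N+1} is automatically positive definite.) -/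

import Mathlib

open Matrix
open scoped ComplexOrder

private lemma aux_posdef {n : ℕ} (Q G : Matrix (Fin n) (Fin n) ℂ)
    (hQproj : Q * Q = Q) (hQherm : Qᴴ = Q) (hG : G.PosSemidef)
    (hGQ : G * Q = G)
    (hker : ∀ v : Fin n → ℂ, Q *ᵥ v = v → G *ᵥ v = 0 → v = 0) :
    (1 - Q + G).PosDef := by
  have hP : (1 - Q : Matrix (Fin n) (Fin n) ℂ).PosSemidef := by
    have h1 : (1 - Q : Matrix (Fin n) (Fin n) ℂ) = (1 - Q)ᴴ * (1 - Q) := by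
      rw [conjTranspose_sub, conjTranspose_one, hQherm]
      linear_combination (norm := noncomm_ring) -hQproj
    rw [h1]
    exact posSemidef_conjTranspose_mul_self _
  have hsum : (1 - Q + G).PosSemidef := hP.add hG
  refine .of_dotProduct_mulVec_pos hsum.1 fun x hx => ?_
  rcases lt_or_eq_of_le (hsum.dotProduct_mulVec_nonneg x) with h | h
  · exact h
  exfalso
  apply hx
  have hsplit : star x ⬝ᵥ (1 - Q + G) *ᵥ x
      = star x ⬝ᵥ (1 - Q) *ᵥ x + star x ⬝ᵥ G *ᵥ x := by
    rw [add_mulVec, dotProduct_add]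
  have hz : star x ⬝ᵥ (1 - Q) *ᵥ x + star x ⬝ᵥ G *ᵥ x = 0 := by
    rw [← hsplit, ← h]
  rw [add_eq_zero_iff_of_nonneg (hP.dotProduct_mulVec_nonneg x) (hG.dotProduct_mulVec_nonneg x)] at hz
  have hPx : (1 - Q) *ᵥ x = 0 := (hP.dotProduct_mulVec_zero_iff x).mp hz.1
  have hGx : G *ᵥ x = 0 := (hG.dotProduct_mulVec_zero_iff x).mp hz.2
  have hQx : Q *ᵥ x = x := by
    have := hPx
    rw [sub_mulVec, one_mulVec, sub_eq_zero] at this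
    exact this.symm
  exact hker x hQx hGx

theorem normalization_matrix_determines_data {n : ℕ}
    (Q₁ Q₂ G₁ G₂ S₁ S₂ : Matrix (Fin n) (Fin n) ℂ)
    (hQ₁proj : Q₁ * Q₁ = Q₁) (hQ₁herm : Q₁ᴴ = Q₁)
    (hQ₂proj : Q₂ * Q₂ = Q₂) (hQ₂herm : Q₂ᴴ = Q₂)
    (hG₁ : G₁.PosSemidef) (hG₂ : G₂.PosSemidef)
    (hG₁Q : G₁ * Q₁ = G₁) (hQG₁ : Q₁ * G₁ = G₁)
    (hG₂Q : G₂ * Q₂ = G₂) (hQG₂ : Q₂ * G₂ = G₂)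
    (hker₁ : ∀ v : Fin n → ℂ, Q₁ *ᵥ v = v → G₁ *ᵥ v = 0 → v = 0)
    (hker₂ : ∀ v : Fin n → ℂ, Q₂ *ᵥ v = v → G₂ *ᵥ v = 0 → v = 0) :
    (1 - Q₁ + G₁).PosDef ∧ (1 - Q₂ + G₂).PosDef ∧
    (S₁.PosDef → S₂.PosDef → S₁ * S₁ = 1 - Q₁ + G₁ → S₂ * S₂ = 1 - Q₂ + G₂ →
      S₁⁻¹ * Q₁ = S₂⁻¹ * Q₂ →
      Q₁ = Q₂ ∧ G₁ = G₂ ∧ 1 - Q₁ + G₁ = 1 - Q₂ + G₂) := by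
  refine ⟨aux_posdef Q₁ G₁ hQ₁proj hQ₁herm hG₁ hG₁Q hker₁,
    aux_posdef Q₂ G₂ hQ₂proj hQ₂herm hG₂ hG₂Q hker₂, ?_⟩
  intro hS₁ hS₂ hSq₁ hSq₂ hC
  have hd₁ : IsUnit S₁.det := hS₁.det_pos.ne'.isUnit
  have hd₂ : IsUnit S₂.det := hS₂.det_pos.ne'.isUnit
  -- Q₁ = Q₂
  have e₁ : Q₁ = S₁ * (S₂⁻¹ * Q₂) := by
    rw [← hC, mul_nonsing_inv_cancel_left _ _ hd₁]
  have e₂ : Q₂ = S₂ * (S₁⁻¹ * Q₁) := by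
    rw [hC, mul_nonsing_inv_cancel_left _ _ hd₂]
  have h12 : Q₁ * Q₂ = Q₁ := by
    conv_lhs => rw [e₁, mul_assoc, mul_assoc, hQ₂proj]
    exact e₁.symm
  have h21 : Q₂ * Q₁ = Q₂ := by
    conv_lhs => rw [e₂, mul_assoc, mul_assoc, hQ₁proj]
    exact e₂.symm
  have hQeq : Q₁ = Q₂ := by
    calc Q₁ = Q₁ᴴ := hQ₁herm.symm
    _ = (Q₁ * Q₂)ᴴ := by rw [h12]
    _ = Q₂ᴴ * Q₁ᴴ := conjTranspose_mul _ _
    _ = Q₂ * Q₁ := by rw [hQ₁herm, hQ₂herm]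
    _ = Q₂ := h21
  subst hQeq
  -- S_i commutes with Q₁
  have fix : ∀ S G : Matrix (Fin n) (Fin n) ℂ, S.PosDef → S * S = 1 - Q₁ + G₁ + (G - G₁) →
      G * Q₁ = G → S * Q₁ = Q₁ * S := by
    intro S G hS hSq hGQ
    have hSq' : S * S = 1 - Q₁ + G := by rw [hSq]; abel
    have key : (S + 1) * ((S - 1) * (1 - Q₁)) = 0 := by
      linear_combination (norm := noncomm_ring) hSq' * (1 - Q₁) - hGQ + hQ₁proj
    have hS1 : (S + 1).PosDef := hS.add_posSemidef Matrix.PosSemidef.one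
    have hd : IsUnit (S + 1).det := hS1.det_pos.ne'.isUnit
    have key2 : (S - 1) * (1 - Q₁) = 0 := by
      have := congrArg (fun M => (S + 1)⁻¹ * M) key
      simpa [nonsing_inv_mul_cancel_left _ _ hd] using this
    have hfix : S * (1 - Q₁) = 1 - Q₁ := by
      have : S * (1 - Q₁) - (1 - Q₁) = 0 := by
        rw [← key2, sub_mul, one_mul]
      linear_combination (norm := noncomm_ring) this
    have hfix' : (1 - Q₁) * S = 1 - Q₁ := by
      have := congrArg conjTranspose hfix
      simpa [conjTranspose_mul, conjTranspose_sub, conjTranspose_one, hQ₁herm, hS.1.eq]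
        using this
    have h1 : S - S * Q₁ = 1 - Q₁ := by rw [← hfix]; rw [mul_sub, mul_one]
    have h2 : S - Q₁ * S = 1 - Q₁ := by rw [← hfix']; rw [sub_mul, one_mul]
    have := h1.trans h2.symm
    linear_combination (norm := noncomm_ring) -this
  have hc₁ : S₁ * Q₁ = Q₁ * S₁ := fix S₁ G₁ hS₁ (by rw [hSq₁]; abel) hG₁Q
  have hc₂ : S₂ * Q₁ = Q₁ * S₂ := fix S₂ G₂ hS₂ (by rw [hSq₂]; abel) hG₂Q
  -- S₁⁻¹ commutes with Q₁
  have hc₁' : S₁⁻¹ * Q₁ = Q₁ * S₁⁻¹ := by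
    have : S₁⁻¹ * (Q₁ * S₁) * S₁⁻¹ = S₁⁻¹ * (S₁ * Q₁) * S₁⁻¹ := by rw [hc₁]
    rw [nonsing_inv_mul_cancel_left _ _ hd₁, mul_assoc, mul_assoc,
      mul_nonsing_inv _ hd₁, mul_one] at this
    exact this
  -- S₁ * Q₁ = S₂ * Q₁
  have hSQ : S₁ * Q₁ = S₂ * Q₁ := by
    have h0 : S₂ * (S₁⁻¹ * Q₁) = Q₁ := by
      rw [hC, mul_nonsing_inv_cancel_left _ _ hd₂]
    rw [hc₁'] at h0
    have := congrArg (fun M => M * S₁) h0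
    simp only [mul_assoc] at this
    rw [nonsing_inv_mul _ hd₁, mul_one] at this
    rw [this, ← hc₁]
  have hGeq : G₁ = G₂ := by
    have hH₁ : G₁ = S₁ * S₁ * Q₁ := by
      rw [hSq₁, add_mul, sub_mul, one_mul, hQ₁proj, hG₁Q]
      abel
    have hH₂ : G₂ = S₂ * S₂ * Q₁ := by
      rw [hSq₂, add_mul, sub_mul, one_mul, hQ₁proj, hG₂Q]
      abel
    rw [hH₁, hH₂]
    calc S₁ * S₁ * Q₁ = S₁ * (S₂ * Q₁) := by rw [mul_assoc, hSQ]
    _ = S₁ * Q₁ * S₂ := by rw [hc₂, ← mul_assoc]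
    _ = S₂ * Q₁ * S₂ := by rw [hSQ]
    _ = S₂ * (S₂ * Q₁) := by conv_rhs => rw [hc₂, ← mul_assoc]
    _ = S₂ * S₂ * Q₁ := by rw [mul_assoc]
  exact ⟨rfl, hGeq, by rw [hGeq]⟩
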